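/- Let B=(G,H) be a pseudo-Laman bigraph with biedge set ℰ without self-loops, fix a biedge ē∈ℰ, and let d=(d_V,d_W) be a bidistance on B compatible with wt=(−1,…,−1) such that d_V and d_W take values only in {0,−1}. Suppose that ē is neither a bridge in G nor a bridge in H, and that neither d_V nor d_W is identically zero. Then the quotient bigraph B_d untangles via ē into two bigraphs, with respect to the partition ℰ=ℰ₁⊔ℰ₂⊔{ē}, where ℰ₁={e∈ℰ : d_V=0 on τ_G(e) and d_W=−1 on τ_H(e)} and ℰ₂={e∈ℰ : d_V=−1 on τ_G(e) and d_W=0 on τ_H(e)}. -/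

import Mathlib

set_option maxHeartbeats 1000000

noncomputable section
open Classical

namespace LamanPaper

variable {V E : Type}

/-- The adjacency relation induced by an incidence map `ends`. -/
def adjRel (ends : E → Sym2 V) : V → V → Prop := fun u v => ∃ e : E, ends e = s(u, v)

/-- The setoid of connected components of the graph with incidence map `ends`. -/
def ccSetoid (ends : E → Sym2 V) : Setoid V :=
  ⟨Relation.EqvGen (adjRel ends), Relation.EqvGen.is_equivalence _⟩

/-- The number of connected components. -/
def numCC (ends : E → Sym2 V) : ℕ := Nat.card (Quotient (ccSetoid ends))

/-- The dimension of a graph: number of vertices minus number of connected components. -/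
def gDim (ends : E → Sym2 V) : ℕ := Nat.card V - numCC ends

/-- Restriction of a graph to a set of edges. -/
def restrictEnds (ends : E → Sym2 V) (S : Set E) : {e : E // e ∈ S} → Sym2 V :=
  fun e => ends e.1

/-- Deletion of a set of edges from a graph. -/
def deleteEnds (ends : E → Sym2 V) (S : Set E) : {e : E // e ∉ S} → Sym2 V :=
  fun e => ends e.1

/-- The setoid on vertices generated by contracting the edges in `S`. -/
def contrSetoid (ends : E → Sym2 V) (S : Set E) : Setoid V :=
  ⟨Relation.EqvGen fun u v => ∃ e ∈ S, ends e = s(u, v), Relation.EqvGen.is_equivalence _⟩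

/-- Contraction of the edges in `S`: the remaining edges join the equivalence classes of
their endpoints. -/
def contractEnds (ends : E → Sym2 V) (S : Set E) :
    {e : E // e ∉ S} → Sym2 (Quotient (contrSetoid ends S)) :=
  fun e => (ends e.1).map (Quotient.mk (contrSetoid ends S))

/-- An edge is a bridge if deleting it increases the number of connected components. -/
def IsBridge (ends : E → Sym2 V) (e : E) : Prop :=
  numCC ends < numCC (deleteEnds ends ({e} : Set E))

/-- The smaller endpoint of an (unordered) edge, with respect to a linear order. -/
def sMin [LinearOrder V] (s : Sym2 V) : V :=
  Sym2.lift ⟨fun a b => min a b, fun a b => min_comm a b⟩ s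

/-- The larger endpoint of an (unordered) edge, with respect to a linear order. -/
def sMax [LinearOrder V] (s : Sym2 V) : V :=
  Sym2.lift ⟨fun a b => max a b, fun a b => max_comm a b⟩ s

theorem sMin_mem [LinearOrder V] (s : Sym2 V) : sMin s ∈ s := by
  induction s using Sym2.ind with
  | _ x y => rcases min_choice x y with h | h <;> simp [sMin, Sym2.lift_mk, h, Sym2.mem_iff]

theorem sMax_mem [LinearOrder V] (s : Sym2 V) : sMax s ∈ s := by
  induction s using Sym2.ind with
  | _ x y => rcases max_choice x y with h | h <;> simp [sMax, Sym2.lift_mk, h, Sym2.mem_iff]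

/-- A bigraph: a pair of finite multigraphs `G = (V, ℰ)` and `H = (W, ℰ)` sharing the same
set of (bi)edges, together with fixed total orders on the two vertex sets. -/
structure Bigraph where
  ℰ : Type
  V : Type
  W : Type
  finE : Finite ℰ
  finV : Finite V
  finW : Finite W
  τG : ℰ → Sym2 V
  τH : ℰ → Sym2 W
  ordV : LinearOrder V
  ordW : LinearOrder W

namespace Bigraph

variable (B : Bigraph)

instance : Finite B.ℰ := B.finE
instance : Finite B.V := B.finV
instance : Finite B.W := B.finW

/-- The dimension of the first graph of a bigraph. -/
def dimG : ℕ := gDim B.τG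

/-- The dimension of the second graph of a bigraph. -/
def dimH : ℕ := gDim B.τH

/-- A bigraph is pseudo-Laman if `dim G + dim H = |ℰ| + 1`. -/
def PseudoLaman : Prop := B.dimG + B.dimH = Nat.card B.ℰ + 1

/-- A bigraph has a (self-)loop if some biedge is a self-loop in `G` or in `H`. -/
def HasLoop : Prop := (∃ e, (B.τG e).IsDiag) ∨ (∃ e, (B.τH e).IsDiag)

/-- The set `P` of ordered pairs of distinct vertices of `G` joined by some edge. -/
def Pset : Set (B.V × B.V) := {p | p.1 ≠ p.2 ∧ ∃ e, B.τG e = s(p.1, p.2)}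

/-- The set `Q` of ordered pairs of distinct vertices of `H` joined by some edge. -/
def Qset : Set (B.W × B.W) := {q | q.1 ≠ q.2 ∧ ∃ e, B.τH e = s(q.1, q.2)}

/-- The smaller endpoint (w.r.t. the fixed total order) of a biedge in `G`. -/
def eFstG (e : B.ℰ) : B.V := letI := B.ordV; sMin (B.τG e)

/-- The larger endpoint of a biedge in `G`. -/
def eSndG (e : B.ℰ) : B.V := letI := B.ordV; sMax (B.τG e)

/-- The smaller endpoint of a biedge in `H`. -/
def eFstH (e : B.ℰ) : B.W := letI := B.ordW; sMin (B.τH e)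

/-- The larger endpoint of a biedge in `H`. -/
def eSndH (e : B.ℰ) : B.W := letI := B.ordW; sMax (B.τH e)

theorem eFstG_mem (e : B.ℰ) : B.eFstG e ∈ B.τG e := by
  letI := B.ordV; exact sMin_mem _

theorem eSndG_mem (e : B.ℰ) : B.eSndG e ∈ B.τG e := by
  letI := B.ordV; exact sMax_mem _

theorem eFstH_mem (e : B.ℰ) : B.eFstH e ∈ B.τH e := by
  letI := B.ordW; exact sMin_mem _

theorem eSndH_mem (e : B.ℰ) : B.eSndH e ∈ B.τH e := by
  letI := B.ordW; exact sMax_mem _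

/-- The affine solution set `Z^B(λ)` of a bigraph with distinguished biedge `ebar` and
parameters `lam`. -/
def ZSet (ebar : B.ℰ) (lam : {e : B.ℰ // e ≠ ebar} → ℂ) :
    Set ((↥B.Pset → ℂ) × (↥B.Qset → ℂ)) :=
  {xy |
    (∀ p : ↥B.Pset, (p : B.V × B.V) = (B.eFstG ebar, B.eSndG ebar) → xy.1 p = 1) ∧
    (∀ q : ↥B.Qset, (q : B.W × B.W) = (B.eFstH ebar, B.eSndH ebar) → xy.2 q = 1) ∧
    (∀ e : {e : B.ℰ // e ≠ ebar}, ∀ p : ↥B.Pset, ∀ q : ↥B.Qset,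
      (p : B.V × B.V) = (B.eFstG e.1, B.eSndG e.1) →
      (q : B.W × B.W) = (B.eFstH e.1, B.eSndH e.1) →
      xy.1 p * xy.2 q = lam e) ∧
    (∀ (n : ℕ) (u : ℕ → B.V) (w : Fin n → ↥B.Pset),
      (∀ i : Fin n, (w i : B.V × B.V) = (u i.1, u (i.1 + 1))) → u n = u 0 →
      ∑ i, xy.1 (w i) = 0) ∧
    (∀ (n : ℕ) (u : ℕ → B.W) (w : Fin n → ↥B.Qset),
      (∀ i : Fin n, (w i : B.W × B.W) = (u i.1, u (i.1 + 1))) → u n = u 0 →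
      ∑ i, xy.2 (w i) = 0)}

/-- `B` has Laman number `N` with respect to the biedge `ebar`:  there is a nonzero
polynomial `p` in the parameters such that whenever `p` does not vanish, the solution set
`Z^B(λ)` has exactly `N` elements.  By convention a bigraph containing a self-loop has
Laman number `0`. -/
def HasLamanNumber (ebar : B.ℰ) (N : ℕ) : Prop :=
  (B.HasLoop ∧ N = 0) ∨
  (¬ B.HasLoop ∧ ∃ P : MvPolynomial {e : B.ℰ // e ≠ ebar} ℂ, P ≠ 0 ∧
    ∀ lam : {e : B.ℰ // e ≠ ebar} → ℂ, MvPolynomial.eval lam P ≠ 0 →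
      (B.ZSet ebar lam).Finite ∧ Nat.card ↥(B.ZSet ebar lam) = N)

/-- The bigraph obtained by restricting the biedges to a subset `S` (both in `G` and `H`). -/
def restrict (S : Set B.ℰ) : Bigraph where
  ℰ := {e : B.ℰ // e ∈ S}
  V := B.V
  W := B.W
  finE := Subtype.finite
  finV := B.finV
  finW := B.finW
  τG := fun e => B.τG e.1
  τH := fun e => B.τH e.1
  ordV := B.ordV
  ordW := B.ordW

/-- The bigraph `^M B = (G / M, H ∖ M)`: contract the biedges of `M` in `G` and delete them
in `H`. -/
def ctrG (M : Set B.ℰ) (ord : LinearOrder (Quotient (contrSetoid B.τG M))) : Bigraph where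
  ℰ := {e : B.ℰ // e ∉ M}
  V := Quotient (contrSetoid B.τG M)
  W := B.W
  finE := Subtype.finite
  finV := Quotient.finite _
  finW := B.finW
  τG := contractEnds B.τG M
  τH := fun e => B.τH e.1
  ordV := ord
  ordW := B.ordW

/-- The bigraph `B ^ M = (G ∖ M, H / M)`: delete the biedges of `M` in `G` and contract them
in `H`. -/
def ctrH (M : Set B.ℰ) (ord : LinearOrder (Quotient (contrSetoid B.τH M))) : Bigraph where
  ℰ := {e : B.ℰ // e ∉ M}
  V := B.V
  W := Quotient (contrSetoid B.τH M)
  finE := Subtype.finite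
  finV := B.finV
  finW := Quotient.finite _
  τG := fun e => B.τG e.1
  τH := contractEnds B.τH M
  ordV := B.ordV
  ordW := ord

/-! ### Bidistances -/

/-- Symmetry of a function on `P`: `d_V(u,v) = d_V(v,u)`. -/
def BidistSymmG (dV : ↥B.Pset → ℚ) : Prop :=
  ∀ p p' : ↥B.Pset, (p' : B.V × B.V) = ((p : B.V × B.V).2, (p : B.V × B.V).1) → dV p' = dV p

/-- Symmetry of a function on `Q`: `d_W(t,w) = d_W(w,t)`. -/
def BidistSymmH (dW : ↥B.Qset → ℚ) : Prop :=
  ∀ q q' : ↥B.Qset, (q' : B.W × B.W) = ((q : B.W × B.W).2, (q : B.W × B.W).1) → dW q' = dW q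

/-- The sum condition: `d_V(u,v) + d_W(t,w) = wt(e)` for every biedge `e ≠ ebar`. -/
def BidistSum (ebar : B.ℰ) (wt : {e : B.ℰ // e ≠ ebar} → ℚ)
    (dV : ↥B.Pset → ℚ) (dW : ↥B.Qset → ℚ) : Prop :=
  ∀ e : {e : B.ℰ // e ≠ ebar}, ∀ p : ↥B.Pset, ∀ q : ↥B.Qset,
    s((p : B.V × B.V).1, (p : B.V × B.V).2) = B.τG e.1 →
    s((q : B.W × B.W).1, (q : B.W × B.W).2) = B.τH e.1 →
    dV p + dW q = wt e

/-- The base condition: `d_V(ū,v̄) = d_W(t̄,w̄) = 0` on the distinguished biedge. -/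
def BidistBase (ebar : B.ℰ) (dV : ↥B.Pset → ℚ) (dW : ↥B.Qset → ℚ) : Prop :=
  (∀ p : ↥B.Pset, s((p : B.V × B.V).1, (p : B.V × B.V).2) = B.τG ebar → dV p = 0) ∧
  (∀ q : ↥B.Qset, s((q : B.W × B.W).1, (q : B.W × B.W).2) = B.τH ebar → dW q = 0)

/-- On every closed walk in `G`, the minimum of `d_V` over the consecutive vertex pairs is
attained at least twice. -/
def BidistMinG (dV : ↥B.Pset → ℚ) : Prop :=
  ∀ (n : ℕ) (u : ℕ → B.V) (w : Fin n → ↥B.Pset),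
    (∀ i : Fin n, (w i : B.V × B.V) = (u i.1, u (i.1 + 1))) → u n = u 0 →
    ∀ i : Fin n, (∀ k, dV (w i) ≤ dV (w k)) → ∃ j, j ≠ i ∧ dV (w j) = dV (w i)

/-- On every closed walk in `H`, the minimum of `d_W` over the consecutive vertex pairs is
attained at least twice. -/
def BidistMinH (dW : ↥B.Qset → ℚ) : Prop :=
  ∀ (n : ℕ) (u : ℕ → B.W) (w : Fin n → ↥B.Qset),
    (∀ i : Fin n, (w i : B.W × B.W) = (u i.1, u (i.1 + 1))) → u n = u 0 →
    ∀ i : Fin n, (∀ k, dW (w i) ≤ dW (w k)) → ∃ j, j ≠ i ∧ dW (w j) = dW (w i)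

/-- A bidistance on `B` compatible with the weight vector `wt`. -/
def IsBidistance (ebar : B.ℰ) (wt : {e : B.ℰ // e ≠ ebar} → ℚ)
    (dV : ↥B.Pset → ℚ) (dW : ↥B.Qset → ℚ) : Prop :=
  B.BidistSymmG dV ∧ B.BidistSymmH dW ∧ B.BidistSum ebar wt dV dW ∧
  B.BidistBase ebar dV dW ∧ B.BidistMinG dV ∧ B.BidistMinH dW

/-! ### The quotient bigraph `B_d` -/

/-- The value of `d_V` on (the endpoint pair of) a biedge. -/
def gvalG (dV : ↥B.Pset → ℚ) (e : B.ℰ) : ℚ :=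
  if h : ∃ p : ↥B.Pset, s((p : B.V × B.V).1, (p : B.V × B.V).2) = B.τG e then dV h.choose
  else 0

/-- The value of `d_W` on (the endpoint pair of) a biedge. -/
def gvalH (dW : ↥B.Qset → ℚ) (e : B.ℰ) : ℚ :=
  if h : ∃ q : ↥B.Qset, s((q : B.W × B.W).1, (q : B.W × B.W).2) = B.τH e then dW h.choose
  else 0

/-- Incidences of the graph `G`: pairs of a biedge and one of its endpoints. -/
def IncG := {q : B.ℰ × B.V // q.2 ∈ B.τG q.1}

/-- Incidences of the graph `H`. -/
def IncH := {q : B.ℰ × B.W // q.2 ∈ B.τH q.1}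

instance : Finite B.IncG := by unfold IncG; infer_instance
instance : Finite B.IncH := by unfold IncH; infer_instance

/-- Two incidences `(e,v)`, `(e',v')` of `G` are identified in `B_d` if the `d_V`-levels of
`e` and `e'` agree (say equal to `α`) and `v`, `v'` are connected by edges of level `> α`. -/
def relIncG (dV : ↥B.Pset → ℚ) : B.IncG → B.IncG → Prop := fun a b =>
  B.gvalG dV a.1.1 = B.gvalG dV b.1.1 ∧
  Relation.EqvGen (fun u v => ∃ e, B.gvalG dV a.1.1 < B.gvalG dV e ∧ B.τG e = s(u, v))
    a.1.2 b.1.2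

def relIncH (dW : ↥B.Qset → ℚ) : B.IncH → B.IncH → Prop := fun a b =>
  B.gvalH dW a.1.1 = B.gvalH dW b.1.1 ∧
  Relation.EqvGen (fun u v => ∃ e, B.gvalH dW a.1.1 < B.gvalH dW e ∧ B.τH e = s(u, v))
    a.1.2 b.1.2

def incSetoidG (dV : ↥B.Pset → ℚ) : Setoid B.IncG :=
  ⟨Relation.EqvGen (B.relIncG dV), Relation.EqvGen.is_equivalence _⟩

def incSetoidH (dW : ↥B.Qset → ℚ) : Setoid B.IncH :=
  ⟨Relation.EqvGen (B.relIncH dW), Relation.EqvGen.is_equivalence _⟩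

/-- The vertices of the first graph `G_{d_V}` of the quotient bigraph `B_d`:
classes of incidences.  This realizes the disjoint union of the contractions
`G_{≥α} / G_{>α}` (with isolated vertices discarded). -/
def QVertG (dV : ↥B.Pset → ℚ) := Quotient (B.incSetoidG dV)

def QVertH (dW : ↥B.Qset → ℚ) := Quotient (B.incSetoidH dW)

/-- The incidence map of `G_{d_V}`. -/
def quotEndsG (dV : ↥B.Pset → ℚ) : B.ℰ → Sym2 (B.QVertG dV) := fun e =>
  s(Quotient.mk (B.incSetoidG dV) ⟨(e, B.eFstG e), B.eFstG_mem e⟩,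
    Quotient.mk (B.incSetoidG dV) ⟨(e, B.eSndG e), B.eSndG_mem e⟩)

/-- The incidence map of `H_{d_W}`. -/
def quotEndsH (dW : ↥B.Qset → ℚ) : B.ℰ → Sym2 (B.QVertH dW) := fun e =>
  s(Quotient.mk (B.incSetoidH dW) ⟨(e, B.eFstH e), B.eFstH_mem e⟩,
    Quotient.mk (B.incSetoidH dW) ⟨(e, B.eSndH e), B.eSndH_mem e⟩)

/-- The quotient bigraph `B_d = (G_{d_V}, H_{d_W})` of a bigraph by a bidistance `(d_V, d_W)`,
with arbitrarily fixed total orders on the new vertex sets.  It has the same biedges as `B`. -/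
def quotBigraph (dV : ↥B.Pset → ℚ) (dW : ↥B.Qset → ℚ)
    (oV : LinearOrder (B.QVertG dV)) (oW : LinearOrder (B.QVertH dW)) : Bigraph where
  ℰ := B.ℰ
  V := B.QVertG dV
  W := B.QVertH dW
  finE := B.finE
  finV := Quotient.finite _
  finW := Quotient.finite _
  τG := B.quotEndsG dV
  τH := B.quotEndsH dW
  ordV := oV
  ordW := oW

/-! ### Untangling -/

/-- `B` untangles via the biedge `ebar` with respect to the decomposition
`ℰ = E1 ⊔ E2 ⊔ {ebar}`, `V = V1 ⊔ V2`, `W = W1 ⊔ W2`:  the graph `G` is the disjoint union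
of the subgraph on `V1` with edges `E1 ∪ {ebar}` and the subgraph on `V2` with edges `E2`,
while `H` is the disjoint union of the subgraph on `W1` with edges `E1` and the subgraph on
`W2` with edges `E2 ∪ {ebar}`.  The two bigraphs into which `B` untangles are then
`B₁ = B.restrict E1` and `B₂ = B.restrict E2`. -/
def Untangles (ebar : B.ℰ) (E1 E2 : Set B.ℰ) (V1 V2 : Set B.V) (W1 W2 : Set B.W) : Prop :=
  ebar ∉ E1 ∧ ebar ∉ E2 ∧ E1 ∩ E2 = ∅ ∧ (∀ e : B.ℰ, e = ebar ∨ e ∈ E1 ∨ e ∈ E2) ∧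
  V1 ∩ V2 = ∅ ∧ V1 ∪ V2 = Set.univ ∧
  (∀ e ∈ E1, ∀ v, v ∈ B.τG e → v ∈ V1) ∧ (∀ v, v ∈ B.τG ebar → v ∈ V1) ∧
  (∀ e ∈ E2, ∀ v, v ∈ B.τG e → v ∈ V2) ∧
  W1 ∩ W2 = ∅ ∧ W1 ∪ W2 = Set.univ ∧
  (∀ e ∈ E1, ∀ x, x ∈ B.τH e → x ∈ W1) ∧
  (∀ e ∈ E2, ∀ x, x ∈ B.τH e → x ∈ W2) ∧ (∀ x, x ∈ B.τH ebar → x ∈ W2)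

/-! ### The rational map `f_B` -/

/-- The vector of coordinates of the rational map `f_B`, evaluated on representatives
`x : V → ℂ` and `y : W → ℂ`:  the `e`-th coordinate is `(x_u - x_v)(y_t - y_w)` where
`{u,v} = τ_G(e)` with `u ≺ v` and `{t,w} = τ_H(e)` with `t ≺ w`.  (For a self-loop the
corresponding factor is `0`.) -/
def fVec (x : B.V → ℂ) (y : B.W → ℂ) : B.ℰ → ℂ :=
  fun e => (x (B.eFstG e) - x (B.eSndG e)) * (y (B.eFstH e) - y (B.eSndH e))

/-- The subspace `L_G` of vectors that are constant on each connected component of `G`. -/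
def LG : Submodule ℂ (B.V → ℂ) where
  carrier := {x | ∀ u v : B.V, Relation.EqvGen (adjRel B.τG) u v → x u = x v}
  add_mem' := by
    intro a b ha hb u v h
    simp only [Pi.add_apply, ha u v h, hb u v h]
  zero_mem' := by intro u v _; rfl
  smul_mem' := by
    intro c a ha u v h
    simp only [Pi.smul_apply, ha u v h]

/-- The subspace `L_H` of vectors that are constant on each connected component of `H`. -/
def LH : Submodule ℂ (B.W → ℂ) where
  carrier := {y | ∀ u v : B.W, Relation.EqvGen (adjRel B.τH) u v → y u = y v}
  add_mem' := by
    intro a b ha hb u v h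
    simp only [Pi.add_apply, ha u v h, hb u v h]
  zero_mem' := by intro u v _; rfl
  smul_mem' := by
    intro c a ha u v h
    simp only [Pi.smul_apply, ha u v h]

/-- Dominance of the rational map `f_B`:  the image of `f_B` is not contained in any
proper algebraic subset of `ℙ(ℂ^ℰ)`, equivalently in no zero set of a nonzero homogeneous
polynomial. -/
def FDominant : Prop :=
  ¬ ∃ (n : ℕ) (P : MvPolynomial B.ℰ ℂ), P ≠ 0 ∧ P.IsHomogeneous n ∧
      ∀ (x : B.V → ℂ) (y : B.W → ℂ), MvPolynomial.eval (B.fVec x y) P = 0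

end Bigraph

/-! Auxiliary lemmas for statement 17. -/

theorem sMin_sMax_eq [LinearOrder V] (s : Sym2 V) : s(sMin s, sMax s) = s := by
  induction s using Sym2.ind with
  | _ x y =>
    rcases le_total x y with h | h
    · simp [sMin, sMax, min_eq_left h, max_eq_right h]
    · simp only [sMin, sMax, Sym2.lift_mk]
      rw [min_eq_right h, max_eq_left h, Sym2.eq_swap]

namespace Bigraph

theorem existsP (B : Bigraph) (e : B.ℰ) (h : ¬ (B.τG e).IsDiag) :
    ∃ p : ↥B.Pset, s((p : B.V × B.V).1, (p : B.V × B.V).2) = B.τG e := by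
  letI := B.ordV
  have hs : s(sMin (B.τG e), sMax (B.τG e)) = B.τG e := sMin_sMax_eq (B.τG e)
  have hne : sMin (B.τG e) ≠ sMax (B.τG e) := by
    intro hh
    apply h
    rw [← hs, hh]
    exact Sym2.mk_isDiag_iff.mpr rfl
  exact ⟨⟨(sMin (B.τG e), sMax (B.τG e)), hne, e, hs.symm⟩, hs⟩

theorem existsQ (B : Bigraph) (e : B.ℰ) (h : ¬ (B.τH e).IsDiag) :
    ∃ q : ↥B.Qset, s((q : B.W × B.W).1, (q : B.W × B.W).2) = B.τH e := by
  letI := B.ordW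
  have hs : s(sMin (B.τH e), sMax (B.τH e)) = B.τH e := sMin_sMax_eq (B.τH e)
  have hne : sMin (B.τH e) ≠ sMax (B.τH e) := by
    intro hh
    apply h
    rw [← hs, hh]
    exact Sym2.mk_isDiag_iff.mpr rfl
  exact ⟨⟨(sMin (B.τH e), sMax (B.τH e)), hne, e, hs.symm⟩, hs⟩

theorem gvalG_eq (B : Bigraph) (dV : ↥B.Pset → ℚ) (hsym : B.BidistSymmG dV)
    (e : B.ℰ) (p : ↥B.Pset) (hp : s((p : B.V × B.V).1, (p : B.V × B.V).2) = B.τG e) :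
    B.gvalG dV e = dV p := by
  have hex : ∃ p' : ↥B.Pset, s((p' : B.V × B.V).1, (p' : B.V × B.V).2) = B.τG e := ⟨p, hp⟩
  rw [Bigraph.gvalG, dif_pos hex]
  have hc := (hex.choose_spec.trans hp.symm)
  rw [Sym2.eq_iff] at hc
  rcases hc with ⟨h1, h2⟩ | ⟨h1, h2⟩
  · congr 1
    exact Subtype.ext (Prod.ext_iff.mpr ⟨h1, h2⟩)
  · exact hsym p hex.choose (Prod.ext_iff.mpr ⟨h1, h2⟩)

theorem gvalH_eq (B : Bigraph) (dW : ↥B.Qset → ℚ) (hsym : B.BidistSymmH dW)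
    (e : B.ℰ) (q : ↥B.Qset) (hq : s((q : B.W × B.W).1, (q : B.W × B.W).2) = B.τH e) :
    B.gvalH dW e = dW q := by
  have hex : ∃ q' : ↥B.Qset, s((q' : B.W × B.W).1, (q' : B.W × B.W).2) = B.τH e := ⟨q, hq⟩
  rw [Bigraph.gvalH, dif_pos hex]
  have hc := (hex.choose_spec.trans hq.symm)
  rw [Sym2.eq_iff] at hc
  rcases hc with ⟨h1, h2⟩ | ⟨h1, h2⟩
  · congr 1
    exact Subtype.ext (Prod.ext_iff.mpr ⟨h1, h2⟩)
  · exact hsym q hex.choose (Prod.ext_iff.mpr ⟨h1, h2⟩)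

end Bigraph


/-- Under the stated conditions the quotient bigraph `B_d` untangles via
`ē` with respect to the partition `ℰ = ℰ₁ ⊔ ℰ₂ ⊔ {ē}`, where
`ℰ₁ = {e : d_V = 0 on τ_G(e), d_W = -1 on τ_H(e)}` and
`ℰ₂ = {e : d_V = -1 on τ_G(e), d_W = 0 on τ_H(e)}`. -/
theorem statement17 (B : Bigraph) (hloop : ¬ B.HasLoop) (hpl : B.PseudoLaman)
    (ebar : B.ℰ) (dV : ↥B.Pset → ℚ) (dW : ↥B.Qset → ℚ)
    (hd : B.IsBidistance ebar (fun _ => (-1 : ℚ)) dV dW)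
    (hvV : ∀ p, dV p = 0 ∨ dV p = -1) (hvW : ∀ q, dW q = 0 ∨ dW q = -1)
    (hbG : ¬ IsBridge B.τG ebar) (hbH : ¬ IsBridge B.τH ebar)
    (hV : ¬ ∀ p, dV p = 0) (hW : ¬ ∀ q, dW q = 0)
    (oV : LinearOrder (B.QVertG dV)) (oW : LinearOrder (B.QVertH dW)) :
    ∃ (V1 V2 : Set (B.QVertG dV)) (W1 W2 : Set (B.QVertH dW)),
      (B.quotBigraph dV dW oV oW).Untangles ebar
        {e : B.ℰ |
          (∀ p : ↥B.Pset, s((p : B.V × B.V).1, (p : B.V × B.V).2) = B.τG e → dV p = 0) ∧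
          (∀ q : ↥B.Qset, s((q : B.W × B.W).1, (q : B.W × B.W).2) = B.τH e → dW q = -1)}
        {e : B.ℰ |
          (∀ p : ↥B.Pset, s((p : B.V × B.V).1, (p : B.V × B.V).2) = B.τG e → dV p = -1) ∧
          (∀ q : ↥B.Qset, s((q : B.W × B.W).1, (q : B.W × B.W).2) = B.τH e → dW q = 0)}
        V1 V2 W1 W2 := by
  obtain ⟨hsymG, hsymH, hsum, ⟨hbase1, hbase2⟩, -, -⟩ := hd
  have hnlG : ∀ e, ¬ (B.τG e).IsDiag := fun e h => hloop (Or.inl ⟨e, h⟩)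
  have hnlH : ∀ e, ¬ (B.τH e).IsDiag := fun e h => hloop (Or.inr ⟨e, h⟩)
  -- values on ebar
  have hgV0 : B.gvalG dV ebar = 0 := by
    obtain ⟨p, hp⟩ := B.existsP ebar (hnlG ebar)
    rw [B.gvalG_eq dV hsymG ebar p hp]
    exact hbase1 p hp
  have hgW0 : B.gvalH dW ebar = 0 := by
    obtain ⟨q, hq⟩ := B.existsQ ebar (hnlH ebar)
    rw [B.gvalH_eq dW hsymH ebar q hq]
    exact hbase2 q hq
  -- characterizations of E1 and E2
  have hE1 : ∀ e : B.ℰ,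
      ((∀ p : ↥B.Pset, s((p : B.V × B.V).1, (p : B.V × B.V).2) = B.τG e → dV p = 0) ∧
        (∀ q : ↥B.Qset, s((q : B.W × B.W).1, (q : B.W × B.W).2) = B.τH e → dW q = -1)) ↔
      (B.gvalG dV e = 0 ∧ B.gvalH dW e = -1) := by
    intro e
    constructor
    · rintro ⟨h1, h2⟩
      obtain ⟨p, hp⟩ := B.existsP e (hnlG e)
      obtain ⟨q, hq⟩ := B.existsQ e (hnlH e)
      rw [B.gvalG_eq dV hsymG e p hp, B.gvalH_eq dW hsymH e q hq]
      exact ⟨h1 p hp, h2 q hq⟩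
    · rintro ⟨h1, h2⟩
      constructor
      · intro p hp; rw [← B.gvalG_eq dV hsymG e p hp]; exact h1
      · intro q hq; rw [← B.gvalH_eq dW hsymH e q hq]; exact h2
  have hE2 : ∀ e : B.ℰ,
      ((∀ p : ↥B.Pset, s((p : B.V × B.V).1, (p : B.V × B.V).2) = B.τG e → dV p = -1) ∧
        (∀ q : ↥B.Qset, s((q : B.W × B.W).1, (q : B.W × B.W).2) = B.τH e → dW q = 0)) ↔
      (B.gvalG dV e = -1 ∧ B.gvalH dW e = 0) := by
    intro e
    constructor
    · rintro ⟨h1, h2⟩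
      obtain ⟨p, hp⟩ := B.existsP e (hnlG e)
      obtain ⟨q, hq⟩ := B.existsQ e (hnlH e)
      rw [B.gvalG_eq dV hsymG e p hp, B.gvalH_eq dW hsymH e q hq]
      exact ⟨h1 p hp, h2 q hq⟩
    · rintro ⟨h1, h2⟩
      constructor
      · intro p hp; rw [← B.gvalG_eq dV hsymG e p hp]; exact h1
      · intro q hq; rw [← B.gvalH_eq dW hsymH e q hq]; exact h2
  -- every edge other than ebar lies in E1 or E2
  have key : ∀ e : B.ℰ, e ≠ ebar →
      (B.gvalG dV e = 0 ∧ B.gvalH dW e = -1) ∨ (B.gvalG dV e = -1 ∧ B.gvalH dW e = 0) := by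
    intro e he
    obtain ⟨p, hp⟩ := B.existsP e (hnlG e)
    obtain ⟨q, hq⟩ := B.existsQ e (hnlH e)
    have hs : dV p + dW q = -1 := hsum ⟨e, he⟩ p q hp hq
    rw [B.gvalG_eq dV hsymG e p hp, B.gvalH_eq dW hsymH e q hq]
    rcases hvV p with h0 | h1
    · left; exact ⟨h0, by linarith⟩
    · right; exact ⟨h1, by linarith⟩
  -- the level functions on the quotient vertex sets
  have gVcompat : ∀ a b : B.IncG, Relation.EqvGen (B.relIncG dV) a b →
      B.gvalG dV a.1.1 = B.gvalG dV b.1.1 := by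
    intro a b h
    induction h with
    | rel _ _ h => exact h.1
    | refl => rfl
    | symm _ _ _ ih => exact ih.symm
    | trans _ _ _ _ _ ih1 ih2 => exact ih1.trans ih2
  have gWcompat : ∀ a b : B.IncH, Relation.EqvGen (B.relIncH dW) a b →
      B.gvalH dW a.1.1 = B.gvalH dW b.1.1 := by
    intro a b h
    induction h with
    | rel _ _ h => exact h.1
    | refl => rfl
    | symm _ _ _ ih => exact ih.symm
    | trans _ _ _ _ _ ih1 ih2 => exact ih1.trans ih2
  let gV : B.QVertG dV → ℚ := Quotient.lift (fun a => B.gvalG dV a.1.1) gVcompat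
  let gW : B.QVertH dW → ℚ := Quotient.lift (fun a => B.gvalH dW a.1.1) gWcompat
  refine ⟨{x | gV x = 0}, {x | gV x ≠ 0}, {x | gW x ≠ 0}, {x | gW x = 0}, ?_, ?_, ?_, ?_,
    ?_, ?_, ?_, ?_, ?_, ?_, ?_, ?_, ?_, ?_⟩
  · -- ebar ∉ E1
    intro h
    have := ((hE1 ebar).mp h).2
    rw [hgW0] at this
    norm_num at this
  · -- ebar ∉ E2
    intro h
    have := ((hE2 ebar).mp h).1
    rw [hgV0] at this
    norm_num at this
  · -- E1 ∩ E2 = ∅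
    ext e
    simp only [Set.mem_inter_iff, Set.mem_empty_iff_false, iff_false, not_and]
    intro h1 h2
    have a1 := ((hE1 e).mp h1).1
    have a2 := ((hE2 e).mp h2).1
    rw [a1] at a2
    norm_num at a2
  · -- completeness
    intro e
    by_cases he : e = ebar
    · exact Or.inl he
    · rcases key e he with h | h
      · exact Or.inr (Or.inl ((hE1 e).mpr h))
      · exact Or.inr (Or.inr ((hE2 e).mpr h))
  · -- V1 ∩ V2 = ∅
    ext x
    simp only [Set.mem_inter_iff, Set.mem_setOf_eq, Set.mem_empty_iff_false, iff_false, not_and]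
    intro h; exact h.2 h.1
  · -- V1 ∪ V2 = univ
    ext x
    simp only [Set.mem_union, Set.mem_setOf_eq, Set.mem_univ, iff_true]
    tauto
  · -- E1 endpoints in V1
    intro e he v hv
    have h1 := ((hE1 e).mp he).1
    rcases Sym2.mem_iff.mp hv with h | h <;> (subst h; exact h1)
  · -- ebar endpoints in V1
    intro v hv
    rcases Sym2.mem_iff.mp hv with h | h <;> (subst h; exact hgV0)
  · -- E2 endpoints in V2
    intro e he v hv
    have h1 := ((hE2 e).mp he).1
    rcases Sym2.mem_iff.mp hv with h | h <;>
      (subst h; show B.gvalG dV e ≠ 0; rw [h1]; norm_num)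
  · -- W1 ∩ W2 = ∅
    ext x
    simp only [Set.mem_inter_iff, Set.mem_setOf_eq, Set.mem_empty_iff_false, iff_false, not_and]
    intro h; exact h.1 h.2
  · -- W1 ∪ W2 = univ
    ext x
    simp only [Set.mem_union, Set.mem_setOf_eq, Set.mem_univ, iff_true]
    exact (Classical.em (gW x = 0)).symm
  · -- E1 endpoints in W1
    intro e he x hx
    have h2 := ((hE1 e).mp he).2
    rcases Sym2.mem_iff.mp hx with h | h <;>
      (subst h; show B.gvalH dW e ≠ 0; rw [h2]; norm_num)
  · -- E2 endpoints in W2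
    intro e he x hx
    have h2 := ((hE2 e).mp he).2
    rcases Sym2.mem_iff.mp hx with h | h <;> (subst h; exact h2)
  · -- ebar endpoints in W2
    intro x hx
    rcases Sym2.mem_iff.mp hx with h | h <;> (subst h; exact hgW0)

end LamanPaper
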